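/- Consider the planar system z' = z^{μ} v, v' = −ρ z^{μ−1} v² with μ ≥ 1 an integer and ρ ∈ ℂ, ρ ≠ μ−1. Set μ_Y = μ−1 and c = (ρ−μ_Y) z₀^{μ_Y} v₀. Then the solution with initial data (z₀, v₀), z₀, v₀ ≠ 0, is z(t) = z₀·exp((1/(ρ−μ_Y))·Log(1+ct)) and v(t) = v₀·exp((−ρ/(ρ−μ_Y))·Log(1+ct)), using the principal branch of the logarithm, for all t with 1+ct in the slit plane ℂ \ ℝ⁻. -/

import Mathlib

open Complex

lemma aux_deriv (c k C : ℂ) (t : ℝ) (ht : 1 + c * t ∈ Complex.slitPlane) :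
    HasDerivAt (fun s : ℝ => C * Complex.exp (k * Complex.log (1 + c * s)))
      (C * Complex.exp (k * Complex.log (1 + c * t)) * k * (1 + c * t)⁻¹ * c) t := by
  have hf : HasDerivAt (fun s : ℝ => 1 + c * (s : ℂ)) c t := by
    simpa using ((Complex.ofRealCLM.hasDerivAt (x := t)).const_mul c).const_add 1
  have hlog := (Complex.hasDerivAt_log ht).comp t hf
  simp only [Function.comp_def] at hlog
  have h := (((hlog.const_mul k).cexp).const_mul C)
  convert h using 1
  all_goals first | rfl | ring

/-- Normal-form geodesic flow near a Fuchsian singularity of order `μ`: with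
`μ_Y = μ−1`, `ρ ≠ μ_Y` and `c = (ρ−μ_Y) z₀^{μ_Y} v₀`, the curves
`z(t) = z₀·exp((ρ−μ_Y)⁻¹·Log(1+ct))` and `v(t) = v₀·exp((−ρ/(ρ−μ_Y))·Log(1+ct))`
(principal logarithm) solve `z' = z^μ v`, `v' = −ρ z^{μ−1} v²` with initial data
`(z₀, v₀)`, for all `t` with `1+ct` in the slit plane `ℂ ∖ ℝ⁻`. -/
theorem fuchsian_normal_form_solution (μ : ℕ) (hμ : 1 ≤ μ) (ρ : ℂ)
    (hρ : ρ ≠ (μ : ℂ) - 1)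
    (z₀ v₀ : ℂ) (hz₀ : z₀ ≠ 0) (hv₀ : v₀ ≠ 0)
    (c : ℂ) (hc : c = (ρ - ((μ : ℂ) - 1)) * z₀ ^ (μ - 1) * v₀)
    (z v : ℝ → ℂ)
    (hz : z = fun t : ℝ =>
      z₀ * Complex.exp ((ρ - ((μ : ℂ) - 1))⁻¹ * Complex.log (1 + c * t)))
    (hv : v = fun t : ℝ =>
      v₀ * Complex.exp ((-ρ / (ρ - ((μ : ℂ) - 1))) * Complex.log (1 + c * t))) :
    z 0 = z₀ ∧ v 0 = v₀ ∧
    ∀ t : ℝ, (1 + c * t) ∈ Complex.slitPlane →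
      HasDerivAt z ((z t) ^ μ * v t) t ∧
      HasDerivAt v (-ρ * (z t) ^ (μ - 1) * (v t) ^ 2) t := by
  obtain ⟨m, rfl⟩ : ∃ m, μ = m + 1 := ⟨μ - 1, by omega⟩
  have hm : m + 1 - 1 = m := rfl
  set d : ℂ := ρ - ((((m:ℕ) + 1 : ℕ) : ℂ) - 1) with hdef
  have hd' : d ≠ 0 := sub_ne_zero.mpr hρ
  refine ⟨?_, ?_, ?_⟩
  · simp [hz]
  · simp [hv]
  · intro t ht
    have hwne : (1 : ℂ) + c * t ≠ 0 := Complex.slitPlane_ne_zero ht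
    set L := Complex.log (1 + c * t) with hL
    have hwinv : Complex.exp (-L) = (1 + c * (t:ℂ))⁻¹ := by
      rw [Complex.exp_neg, hL, Complex.exp_log hwne]
    constructor
    · have h := aux_deriv c d⁻¹ z₀ t ht
      rw [hz, hv]
      convert h using 1
      simp only
      rw [← hL, ← hwinv, mul_pow, ← Complex.exp_nat_mul]
      have e1 : Complex.exp (((m:ℂ)+1) * (d⁻¹ * L)) * Complex.exp (-ρ/d * L)
          = Complex.exp (d⁻¹ * L) * Complex.exp (-L) := by
        rw [← Complex.exp_add, ← Complex.exp_add]
        congr 1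
        field_simp
        rw [hdef]; push_cast; ring
      have e2 : z₀ ^ (m+1) * v₀ = z₀ * d⁻¹ * c := by
        rw [hc, hm]; field_simp; ring
      calc z₀ ^ (m+1) * Complex.exp (((m:ℕ)+1 : ℕ) * (d⁻¹ * L)) *
            (v₀ * Complex.exp (-ρ/d * L))
          = (z₀ ^ (m+1) * v₀) *
            (Complex.exp (((m:ℂ)+1) * (d⁻¹ * L)) * Complex.exp (-ρ/d * L)) := by
            push_cast; ring
        _ = (z₀ * d⁻¹ * c) * (Complex.exp (d⁻¹ * L) * Complex.exp (-L)) := by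
            rw [e1, e2]
        _ = z₀ * Complex.exp (d⁻¹ * L) * d⁻¹ * Complex.exp (-L) * c := by ring
    · have h := aux_deriv c (-ρ/d) v₀ t ht
      rw [hz, hv]
      convert h using 1
      simp only
      rw [← hL, ← hwinv, hm, mul_pow, mul_pow, ← Complex.exp_nat_mul]
      have e1 : Complex.exp ((m:ℂ) * (d⁻¹ * L)) * Complex.exp (-ρ/d * L) ^ 2
          = Complex.exp (-ρ/d * L) * Complex.exp (-L) := by
        rw [sq, ← Complex.exp_add, ← Complex.exp_add, ← Complex.exp_add]
        congr 1
        field_simp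
        rw [hdef]; push_cast; ring
      have e2 : -ρ * z₀ ^ m * v₀ ^ 2 = v₀ * (-ρ/d) * c := by
        rw [hc, hm]; field_simp
      calc -ρ * (z₀ ^ m * Complex.exp ((m:ℕ) * (d⁻¹ * L))) *
            (v₀ ^ 2 * Complex.exp (-ρ/d * L) ^ 2)
          = (-ρ * z₀ ^ m * v₀ ^ 2) *
            (Complex.exp ((m:ℂ) * (d⁻¹ * L)) * Complex.exp (-ρ/d * L) ^ 2) := by
            push_cast; ring
        _ = (v₀ * (-ρ/d) * c) * (Complex.exp (-ρ/d * L) * Complex.exp (-L)) := by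
            rw [e1, e2]
        _ = v₀ * Complex.exp (-ρ/d * L) * (-ρ/d) * Complex.exp (-L) * c := by ring
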